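/- Assume the SICA parameters are positive and the incidence function f satisfies (H1)–(H3). Then for all S, I, C, A > 0: (1 − f(S₀,0)/f(S,0))·(Λ − μS − f(S,I)I) + (f(S,I)I − ξ₁I + σA + ωC) + (ω/ξ₂)(φI − ξ₂C) + (σ/ξ₃)(ρI − ξ₃A) ≤ μ(1 − f(S₀,0)/f(S,0))(S₀ − S) + (𝒟/(ξ₂ξ₃)) I (R₀ − 1). Moreover, if R₀ ≤ 1 the left-hand side is ≤ 0. -/

import Mathlib

set_option maxHeartbeats 1000000


/- STATEMENT 6: Algebraic Lyapunov estimate at the disease-free equilibrium.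
Parameters Λ, μ, ρ, φ, σ, ω, d > 0; ξ₁ = ρ+φ+μ, ξ₂ = ω+μ, ξ₃ = σ+μ+d,
𝒟 = μ[ξ₂(ξ₃+ρ)+φξ₃+ρd]+ρωd, S₀ = Λ/μ, R₀ = f(S₀,0)ξ₂ξ₃/𝒟.
The incidence f satisfies (H1)–(H3). Then for all S, I, C, A > 0:
(1 − f(S₀,0)/f(S,0))·(Λ − μS − f(S,I)I) + (f(S,I)I − ξ₁I + σA + ωC)
  + (ω/ξ₂)(φI − ξ₂C) + (σ/ξ₃)(ρI − ξ₃A)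
  ≤ μ(1 − f(S₀,0)/f(S,0))(S₀ − S) + (𝒟/(ξ₂ξ₃)) I (R₀ − 1);
moreover, if R₀ ≤ 1 the left-hand side is ≤ 0. -/
theorem stmt_6 (Λ μ ρ φ σ ω d ξ₁ ξ₂ ξ₃ D S₀ R₀ : ℝ)
    (hΛ : 0 < Λ) (hμ : 0 < μ) (hρ : 0 < ρ) (hφ : 0 < φ) (hσ : 0 < σ)
    (hω : 0 < ω) (hd : 0 < d)
    (hξ₁ : ξ₁ = ρ + φ + μ) (hξ₂ : ξ₂ = ω + μ) (hξ₃ : ξ₃ = σ + μ + d)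
    (hD : D = μ * (ξ₂ * (ξ₃ + ρ) + φ * ξ₃ + ρ * d) + ρ * ω * d)
    (hS₀ : S₀ = Λ / μ)
    (f : ℝ → ℝ → ℝ)
    (hR₀ : R₀ = f S₀ 0 * ξ₂ * ξ₃ / D)
    (hf_nonneg : ∀ S I : ℝ, 0 ≤ S → 0 ≤ I → 0 ≤ f S I)
    (hf_cont : ContinuousOn (fun p : ℝ × ℝ => f p.1 p.2) (Set.Ici 0 ×ˢ Set.Ici 0))
    (hf_cd : ContDiffOn ℝ 1 (fun p : ℝ × ℝ => f p.1 p.2) (Set.Ioi 0 ×ˢ Set.Ioi 0))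
    (hH1 : ∀ I : ℝ, 0 ≤ I → f 0 I = 0)
    (hH2 : ∀ S I : ℝ, 0 < S → 0 ≤ I → 0 < deriv (fun s => f s I) S)
    (hH3 : ∀ S I : ℝ, 0 ≤ S → 0 ≤ I → deriv (fun i => f S i) I ≤ 0) :
    ∀ S I C A : ℝ, 0 < S → 0 < I → 0 < C → 0 < A →
      ((1 - f S₀ 0 / f S 0) * (Λ - μ * S - f S I * I)
          + (f S I * I - ξ₁ * I + σ * A + ω * C)
          + (ω / ξ₂) * (φ * I - ξ₂ * C)
          + (σ / ξ₃) * (ρ * I - ξ₃ * A)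
        ≤ μ * (1 - f S₀ 0 / f S 0) * (S₀ - S) + (D / (ξ₂ * ξ₃)) * I * (R₀ - 1))
      ∧ (R₀ ≤ 1 →
          (1 - f S₀ 0 / f S 0) * (Λ - μ * S - f S I * I)
            + (f S I * I - ξ₁ * I + σ * A + ω * C)
            + (ω / ξ₂) * (φ * I - ξ₂ * C)
            + (σ / ξ₃) * (ρ * I - ξ₃ * A) ≤ 0) := by

  subst hξ₁ hξ₂ hξ₃ hD hS₀ hR₀
  have hμ' := hμ.ne'
  have hξ₂pos : (0:ℝ) < ω + μ := by linarith
  have hξ₃pos : (0:ℝ) < σ + μ + d := by linarith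
  have hDpos : (0:ℝ) < μ * ((ω + μ) * ((σ + μ + d) + ρ) + φ * (σ + μ + d) + ρ * d) + ρ * ω * d := by
    positivity
  have hS₀pos : (0:ℝ) < Λ / μ := by positivity
  -- monotonicity of s ↦ f s 0 on Ici 0
  have hcontS : ContinuousOn (fun s => f s 0) (Set.Ici 0) := by
    have h : ContinuousOn (fun s : ℝ => (s, (0:ℝ))) (Set.Ici 0) :=
      (continuous_id.prodMk continuous_const).continuousOn
    exact hf_cont.comp h (fun s hs => Set.mem_prod.mpr ⟨hs, Set.mem_Ici.mpr le_rfl⟩)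
  have hmono : StrictMonoOn (fun s => f s 0) (Set.Ici 0) := by
    apply strictMonoOn_of_deriv_pos (convex_Ici 0) hcontS
    intro s hs
    rw [interior_Ici] at hs
    exact hH2 s 0 hs le_rfl
  intro S I C A hS hI hC hA
  have hfS0pos : 0 < f S 0 := by
    have h0 : f 0 0 = 0 := hH1 0 le_rfl
    have := hmono (Set.self_mem_Ici) (Set.mem_Ici.mpr hS.le) hS
    simpa [h0] using this
  have hfS0ne := hfS0pos.ne'
  have hgnn : 0 ≤ f (Λ / μ) 0 := hf_nonneg _ _ hS₀pos.le le_rfl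
  -- f S I ≤ f S 0
  have hanti : AntitoneOn (fun i => f S i) (Set.Icc 0 I) := by
    apply antitoneOn_of_deriv_nonpos (convex_Icc 0 I)
    · have h : ContinuousOn (fun i : ℝ => (S, i)) (Set.Icc 0 I) :=
        (continuous_const.prodMk continuous_id).continuousOn
      exact hf_cont.comp h (fun i hi => Set.mem_prod.mpr ⟨hS.le, hi.1⟩)
    · rw [interior_Icc]
      intro i hi
      have hopen : IsOpen (Set.Ioi (0:ℝ) ×ˢ Set.Ioi (0:ℝ)) := isOpen_Ioi.prod isOpen_Ioi
      have hmem : (S, i) ∈ Set.Ioi (0:ℝ) ×ˢ Set.Ioi (0:ℝ) := Set.mem_prod.mpr ⟨hS, hi.1⟩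
      have hdat : DifferentiableAt ℝ (fun p : ℝ × ℝ => f p.1 p.2) (S, i) :=
        (hf_cd.differentiableOn one_ne_zero).differentiableAt (hopen.mem_nhds hmem)
      have : DifferentiableAt ℝ (fun i : ℝ => f S i) i :=
        hdat.comp i (DifferentiableAt.prodMk (differentiableAt_const S) differentiableAt_id)
      exact this.differentiableWithinAt
    · rw [interior_Icc]
      intro i hi
      exact hH3 S i hS.le hi.1.le
  have hfSI_le : f S I ≤ f S 0 :=
    hanti (Set.mem_Icc.mpr ⟨le_rfl, hI.le⟩) (Set.mem_Icc.mpr ⟨hI.le, le_rfl⟩) hI.le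
  have hfSI_nn : 0 ≤ f S I := hf_nonneg _ _ hS.le hI.le
  set g := f (Λ / μ) 0 with hg
  set a := f S 0 with ha
  set b := f S I with hb
  -- key identity
  have hkey : μ * (1 - g / a) * (Λ / μ - S)
      + ((μ * ((ω + μ) * ((σ + μ + d) + ρ) + φ * (σ + μ + d) + ρ * d) + ρ * ω * d) / ((ω + μ) * (σ + μ + d))) * I
        * (g * (ω + μ) * (σ + μ + d) / (μ * ((ω + μ) * ((σ + μ + d) + ρ) + φ * (σ + μ + d) + ρ * d) + ρ * ω * d) - 1)
      - ((1 - g / a) * (Λ - μ * S - b * I)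
          + (b * I - (ρ + φ + μ) * I + σ * A + ω * C)
          + (ω / (ω + μ)) * (φ * I - (ω + μ) * C)
          + (σ / (σ + μ + d)) * (ρ * I - (σ + μ + d) * A))
      = (g - g / a * b) * I := by
    field_simp
    ring
  have hbound : g / a * b ≤ g := by
    have h1 : g / a * b ≤ g / a * a := by
      apply mul_le_mul_of_nonneg_left hfSI_le
      positivity
    have h2 : g / a * a = g := by field_simp
    linarith
  have hmain : (1 - g / a) * (Λ - μ * S - b * I)
      + (b * I - (ρ + φ + μ) * I + σ * A + ω * C)
      + (ω / (ω + μ)) * (φ * I - (ω + μ) * C)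
      + (σ / (σ + μ + d)) * (ρ * I - (σ + μ + d) * A)
      ≤ μ * (1 - g / a) * (Λ / μ - S)
        + ((μ * ((ω + μ) * ((σ + μ + d) + ρ) + φ * (σ + μ + d) + ρ * d) + ρ * ω * d) / ((ω + μ) * (σ + μ + d))) * I
          * (g * (ω + μ) * (σ + μ + d) / (μ * ((ω + μ) * ((σ + μ + d) + ρ) + φ * (σ + μ + d) + ρ * d) + ρ * ω * d) - 1) := by
    nlinarith [hkey, mul_nonneg (sub_nonneg.mpr hbound) hI.le]
  refine ⟨hmain, fun hR1 => ?_⟩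
  -- second part
  have hterm1 : μ * (1 - g / a) * (Λ / μ - S) ≤ 0 := by
    rcases le_total S (Λ / μ) with hle | hle
    · have hfa : a ≤ g := hmono.monotoneOn (Set.mem_Ici.mpr hS.le) (Set.mem_Ici.mpr hS₀pos.le) hle
      have h1 : 1 - g / a ≤ 0 := by
        have : 1 ≤ g / a := (one_le_div hfS0pos).mpr hfa
        linarith
      have h2 : 0 ≤ Λ / μ - S := by linarith
      exact mul_nonpos_of_nonpos_of_nonneg (mul_nonpos_of_nonneg_of_nonpos hμ.le h1) h2
    · have hfa : g ≤ a := hmono.monotoneOn (Set.mem_Ici.mpr hS₀pos.le) (Set.mem_Ici.mpr hS.le) hle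
      have h1 : 0 ≤ 1 - g / a := by
        have : g / a ≤ 1 := (div_le_one hfS0pos).mpr hfa
        linarith
      have h2 : Λ / μ - S ≤ 0 := by linarith
      exact mul_nonpos_of_nonneg_of_nonpos (mul_nonneg hμ.le h1) h2
  have hterm2 : ((μ * ((ω + μ) * ((σ + μ + d) + ρ) + φ * (σ + μ + d) + ρ * d) + ρ * ω * d) / ((ω + μ) * (σ + μ + d))) * I
        * (g * (ω + μ) * (σ + μ + d) / (μ * ((ω + μ) * ((σ + μ + d) + ρ) + φ * (σ + μ + d) + ρ * d) + ρ * ω * d) - 1)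
      ≤ 0 := by
    have hK : 0 < (μ * ((ω + μ) * ((σ + μ + d) + ρ) + φ * (σ + μ + d) + ρ * d) + ρ * ω * d) / ((ω + μ) * (σ + μ + d)) := by
      positivity
    have hR1' : g * (ω + μ) * (σ + μ + d) / (μ * ((ω + μ) * ((σ + μ + d) + ρ) + φ * (σ + μ + d) + ρ * d) + ρ * ω * d) - 1 ≤ 0 := by
      linarith
    nlinarith [mul_pos hK hI]
  linarith
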